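/- Let S be a family of pieces and K : [0,1] → subsets of C an S-continuous knife function, meaning: for every ε > 0 there is δ > 0 such that for all t, t' with |t'−t| < δ, every S-piece s' ⊆ K(t') contains an S-piece s ⊆ K(t) with s ⊆ s' and Lebesgue(s' \ s) < ε, and symmetrically for the complements C \ K(t). Then for every finite measure V absolutely continuous with respect to Lebesgue measure, the functions t ↦ V^S(K(t)) and t ↦ V^S(C \ K(t)) are uniformly continuous. -/

import Mathlib

open MeasureTheory
open scoped ENNReal

/-- `sVal V S X` is the value `V^S(X)`: the supremum of `V s` over usable pieces `s ∈ S`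
contained in `X`. -/
noncomputable def sVal {α : Type*} [MeasurableSpace α]
    (V : Measure α) (S : Set (Set α)) (X : Set α) : ℝ≥0∞ :=
  ⨆ (s : Set α) (_ : s ∈ S ∧ s ⊆ X), V s

/-- ε-δ characterization of absolute continuity for finite measures. -/
lemma absCont_eps_delta {α : Type*} [MeasurableSpace α] (μ : Measure α)
    (V : Measure α) [IsFiniteMeasure V] (hac : V ≪ μ) {ε' : ℝ≥0∞} (hε' : 0 < ε') :
    ∃ δ : ℝ≥0∞, 0 < δ ∧ ∀ A : Set α, μ A < δ → V A ≤ ε' := by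
  by_contra h
  push_neg at h
  -- choose bad sets
  have hch : ∀ n : ℕ, ∃ A : Set α, μ A < (2 : ℝ≥0∞)⁻¹ ^ n ∧ ε' < V A := by
    intro n
    rcases h ((2 : ℝ≥0∞)⁻¹ ^ n) (by simp [pos_iff_ne_zero, pow_ne_zero]) with ⟨A, hA1, hA2⟩
    exact ⟨A, hA1, hA2⟩
  choose A hAμ hAV using hch
  set B : ℕ → Set α := fun n => toMeasurable μ (A n) with hB
  have hBμ : ∀ n, μ (B n) < (2 : ℝ≥0∞)⁻¹ ^ n := fun n => by
    simpa [hB, measure_toMeasurable] using hAμ n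
  have hBV : ∀ n, ε' < V (B n) :=
    fun n => lt_of_lt_of_le (hAV n) (measure_mono (subset_toMeasurable _ _))
  set U : ℕ → Set α := fun n => ⋃ k, B (n + k) with hU
  have hUm : ∀ n, MeasurableSet (U n) :=
    fun n => MeasurableSet.iUnion fun k => measurableSet_toMeasurable _ _
  have hUanti : Antitone U := by
    intro m n hmn
    refine Set.iUnion_subset fun k => ?_
    have : n + k = m + (n + k - m) := by omega
    rw [this]
    exact Set.subset_iUnion (fun j => B (m + j)) _
  have hUμ : ∀ n, μ (U n) ≤ 2 * (2 : ℝ≥0∞)⁻¹ ^ n := by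
    intro n
    calc μ (U n) ≤ ∑' k, μ (B (n + k)) := measure_iUnion_le _
      _ ≤ ∑' k, (2 : ℝ≥0∞)⁻¹ ^ (n + k) := ENNReal.tsum_le_tsum fun k => (hBμ _).le
      _ = (2 : ℝ≥0∞)⁻¹ ^ n * ∑' k, (2 : ℝ≥0∞)⁻¹ ^ k := by
          simp_rw [pow_add]; rw [ENNReal.tsum_mul_left]
      _ = (2 : ℝ≥0∞)⁻¹ ^ n * 2 := by rw [ENNReal.tsum_geometric]; congr 1; rw [show (1:ℝ≥0∞) - 2⁻¹ = 2⁻¹ by rw [ENNReal.one_sub_inv_two]]; simp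
      _ = 2 * (2 : ℝ≥0∞)⁻¹ ^ n := mul_comm _ _
  have hμA0 : μ (⋂ n, U n) = 0 := by
    refine le_antisymm ?_ zero_le
    have h2 : Filter.Tendsto (fun n : ℕ => 2 * (2 : ℝ≥0∞)⁻¹ ^ n) Filter.atTop (nhds 0) := by
      have : Filter.Tendsto (fun n : ℕ => (2 : ℝ≥0∞)⁻¹ ^ n) Filter.atTop (nhds 0) :=
        ENNReal.tendsto_pow_atTop_nhds_zero_of_lt_one (by
          rw [ENNReal.inv_lt_one]; norm_num)
      simpa using ENNReal.Tendsto.const_mul this (Or.inr (by norm_num))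
    refine le_of_tendsto_of_tendsto tendsto_const_nhds h2 (Filter.Eventually.of_forall fun n => ?_)
    exact le_trans (measure_mono (Set.iInter_subset U n)) (hUμ n)
  have hV0 : V (⋂ n, U n) = 0 := hac hμA0
  have hVinf : V (⋂ n, U n) = ⨅ n, V (U n) :=
    hUanti.measure_iInter (fun n => (hUm n).nullMeasurableSet)
      ⟨0, measure_ne_top V _⟩
  have : ε' ≤ V (⋂ n, U n) := by
    rw [hVinf]
    exact le_iInf fun n =>
      le_trans (hBV n).le (measure_mono (by simpa using Set.subset_iUnion (fun k => B (n + k)) 0))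
  rw [hV0] at this
  exact absurd this (by simpa using hε'.ne')

theorem sVal_uniformContinuous_of_S_continuous {α : Type*} [MeasureSpace α]
    (C : Set α) (S : Set (Set α)) (K : ℝ → Set α)
    (hKC : ∀ t ∈ Set.Icc (0:ℝ) 1, K t ⊆ C)
    (hScont : ∀ ε : ℝ≥0∞, 0 < ε → ∃ δ : ℝ, 0 < δ ∧
      ∀ t ∈ Set.Icc (0:ℝ) 1, ∀ t' ∈ Set.Icc (0:ℝ) 1, |t' - t| < δ →
        (∀ s' ∈ S, s' ⊆ K t' →
          ∃ s ∈ S, s ⊆ K t ∧ s ⊆ s' ∧ volume (s' \ s) < ε) ∧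
        (∀ s' ∈ S, s' ⊆ C \ K t' →
          ∃ s ∈ S, s ⊆ C \ K t ∧ s ⊆ s' ∧ volume (s' \ s) < ε))
    (V : Measure α) [IsFiniteMeasure V] (hac : V ≪ volume) :
    ∀ ε' : ℝ≥0∞, 0 < ε' → ∃ δ : ℝ, 0 < δ ∧
      ∀ t ∈ Set.Icc (0:ℝ) 1, ∀ t' ∈ Set.Icc (0:ℝ) 1, |t' - t| < δ →
        sVal V S (K t') ≤ sVal V S (K t) + ε' ∧
        sVal V S (C \ K t') ≤ sVal V S (C \ K t) + ε' := by
  intro ε' hε'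
  simp only [sVal]
  obtain ⟨ε, hε, hεV⟩ := absCont_eps_delta volume V hac hε'
  obtain ⟨δ, hδ, hδS⟩ := hScont ε hε
  refine ⟨δ, hδ, fun t ht t' ht' htt' => ?_⟩
  obtain ⟨h1, h2⟩ := hδS t ht t' ht' htt'
  constructor
  · refine iSup_le fun s' => iSup_le fun hs' => ?_
    obtain ⟨s, hsS, hsK, hss', hvol⟩ := h1 s' hs'.1 hs'.2
    calc V s' ≤ V s + V (s' \ s) :=
          le_trans (measure_mono (by intro x hx; by_cases h : x ∈ s <;> simp [h, hx]))
            (measure_union_le _ _)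
      _ ≤ sVal V S (K t) + ε' := by
          gcongr
          · exact le_iSup₂_of_le s ⟨hsS, hsK⟩ le_rfl
          · exact hεV _ hvol
  · refine iSup_le fun s' => iSup_le fun hs' => ?_
    obtain ⟨s, hsS, hsK, hss', hvol⟩ := h2 s' hs'.1 hs'.2
    calc V s' ≤ V s + V (s' \ s) :=
          le_trans (measure_mono (by intro x hx; by_cases h : x ∈ s <;> simp [h, hx]))
            (measure_union_le _ _)
      _ ≤ sVal V S (C \ K t) + ε' := by
          gcongr
          · exact le_iSup₂_of_le s ⟨hsS, hsK⟩ le_rfl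
          · exact hεV _ hvol
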